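/- Let g₂, g₃ be complex numbers, and set x₀(B) = (B³ + 27g₃)/(9(B² − 3g₂)) and w(B) = 2(B³ − 9g₂B − 54g₃)/(27(B² − 3g₂)²). Then for every B ∈ ℂ with B² ≠ 3g₂, one has w(B)² · 𝖫₂(B) = 4x₀(B)³ − g₂x₀(B) − g₃, where 𝖫₂(B) = (B² − 3g₂)(B³ − (9/4)g₂B + (27/4)g₃). In other words, if (B, ν) lies on the ℓ=2 Lamé spectral curve ν² = 𝖫₂(B), then the image point (x₀, y₀) = (x₀(B), w(B)ν) of the Hermite–Krichever covering π₂ lies on the elliptic curve y₀² = 4x₀³ − g₂x₀ − g₃. -/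

import Mathlib

theorem lame_HK_covering_l2_lands_on_elliptic_curve (g₂ g₃ : ℂ) (B : ℂ)
    (hB : B ^ 2 ≠ 3 * g₂) :
    (2 * (B ^ 3 - 9 * g₂ * B - 54 * g₃) / (27 * (B ^ 2 - 3 * g₂) ^ 2)) ^ 2
        * ((B ^ 2 - 3 * g₂) * (B ^ 3 - (9 / 4) * g₂ * B + (27 / 4) * g₃))
      = 4 * ((B ^ 3 + 27 * g₃) / (9 * (B ^ 2 - 3 * g₂))) ^ 3
        - g₂ * ((B ^ 3 + 27 * g₃) / (9 * (B ^ 2 - 3 * g₂))) - g₃ ∧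
    ∀ ν : ℂ, ν ^ 2 = (B ^ 2 - 3 * g₂) * (B ^ 3 - (9 / 4) * g₂ * B + (27 / 4) * g₃) →
      (2 * (B ^ 3 - 9 * g₂ * B - 54 * g₃) / (27 * (B ^ 2 - 3 * g₂) ^ 2) * ν) ^ 2
        = 4 * ((B ^ 3 + 27 * g₃) / (9 * (B ^ 2 - 3 * g₂))) ^ 3
          - g₂ * ((B ^ 3 + 27 * g₃) / (9 * (B ^ 2 - 3 * g₂))) - g₃ := by
  have hD : B ^ 2 - 3 * g₂ ≠ 0 := sub_ne_zero.mpr hB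
  have key : (2 * (B ^ 3 - 9 * g₂ * B - 54 * g₃) / (27 * (B ^ 2 - 3 * g₂) ^ 2)) ^ 2
        * ((B ^ 2 - 3 * g₂) * (B ^ 3 - (9 / 4) * g₂ * B + (27 / 4) * g₃))
      = 4 * ((B ^ 3 + 27 * g₃) / (9 * (B ^ 2 - 3 * g₂))) ^ 3
        - g₂ * ((B ^ 3 + 27 * g₃) / (9 * (B ^ 2 - 3 * g₂))) - g₃ := by
    field_simp [show B ^ 2 - g₂ * 3 ≠ 0 by rwa [mul_comm]]
    ring
  refine ⟨key, fun ν hν => ?_⟩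
  rw [mul_pow, hν, key]
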